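/- If any legal program-order-respecting schedule exists for the reduction trace, then for each of the m slot sequences of P₀, the three processes P_{aᵢ} 'opened' during its open subsequence have their sizes s(a_{i₁}) + s(a_{i₂}) + s(a_{i₃}) summing exactly to B; consequently the Unary 3-Partition instance has a solution. -/

import Mathlib

/-- An operation: a read or write on variable `var` with value `val` (the issuing
process is given by the position of the operation in the trace). -/
structure Op where
  isRead : Bool
  var : ℕ
  val : ℕ
deriving DecidableEq

/-- Write of value `v` to the single shared variable `x` (variable `0`). -/
def Wr (v : ℕ) : Op := ⟨false, 0, v⟩

/-- Read of value `v` from the single shared variable `x` (variable `0`). -/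
def Rd (v : ℕ) : Op := ⟨true, 0, v⟩

/-- Values `a, a', b, b', c, c'` are the six distinct integers `1,…,6`. -/
def va : ℕ := 1
def va' : ℕ := 2
def vb : ℕ := 3
def vb' : ℕ := 4
def vc : ℕ := 5
def vc' : ℕ := 6

/-- Open subsequence `Rxa Rxa' Rxa Rxa' Rxa Rxa'`. -/
def openSeq : List Op := [Rd va, Rd va', Rd va, Rd va', Rd va, Rd va']

/-- Sum subsequence `(Rxb Rxb')^B`. -/
def sumSeq (B : ℕ) : List Op := (List.replicate B [Rd vb, Rd vb']).flatten

/-- Close subsequence `Rxc Rxc' Rxc Rxc' Rxc Rxc'`. -/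
def closeSeq : List Op := [Rd vc, Rd vc', Rd vc, Rd vc', Rd vc, Rd vc']

/-- The read-only process `P₀`: `m` slot sequences. -/
def P0 (m B : ℕ) : List Op := (List.replicate m (openSeq ++ sumSeq B ++ closeSeq)).flatten

/-- Process `P_{aᵢ}`: `Wxa'`, then `s(aᵢ)` copies of `Wxb'`, then `Wxc'`. -/
def Pa (sz : ℕ) : List Op := Wr va' :: (List.replicate sz (Wr vb') ++ [Wr vc'])

/-- The trace of the reduction from Unary 3-Partition: `P₀`, the processes
`P_{a₁},…,P_{a_{3m}}`, and the auxiliary processes `P_{c₁} = (Wxa)^{3m}`,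
`P_{c₂} = (Wxb)^{mB}`, `P_{c₃} = (Wxc)^{3m}`. -/
def reductionTrace (m B : ℕ) (s : Fin (3 * m) → ℕ) : List (List Op) :=
  P0 m B :: (List.ofFn (fun i => Pa (s i)) ++
    [List.replicate (3 * m) (Wr va), List.replicate (m * B) (Wr vb),
     List.replicate (3 * m) (Wr vc)])

/-- A position of an operation in a trace: a process index and an index in that
process's sequence. -/
def Pos (procs : List (List Op)) : Type := Σ i : Fin procs.length, Fin ((procs.get i).length)

/-- The operation at a position of the trace. -/
def opAt {procs : List (List Op)} (p : Pos procs) : Op := (procs.get p.1).get p.2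

/-- `σ` numbers the operations of the trace as a legal schedule respecting program
order: it is injective, operations of the same process keep their order, and every
read reads the value of the latest preceding write on the same variable. -/
def LegalSched (procs : List (List Op)) (σ : Pos procs → ℕ) : Prop :=
  Function.Injective σ ∧
  (∀ p q : Pos procs, p.1.val = q.1.val → p.2.val < q.2.val → σ p < σ q) ∧
  (∀ p : Pos procs, (opAt p).isRead = true →
    ∃ q : Pos procs, (opAt q).isRead = false ∧ σ q < σ p ∧
      (opAt q).var = (opAt p).var ∧ (opAt q).val = (opAt p).val ∧
      ∀ q' : Pos procs, (opAt q').isRead = false → (opAt q').var = (opAt p).var →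
        σ q < σ q' → ¬ σ q' < σ p)

/-- A solution of the 3-Partition instance: an assignment of the `3m` elements to `m`
triples, each summing to `B`. -/
def ThreePartSol (m B : ℕ) (s : Fin (3 * m) → ℕ) : Prop :=
  ∃ f : Fin (3 * m) → Fin m,
    (∀ j : Fin m, (Finset.univ.filter (fun i => f i = j)).card = 3) ∧
    (∀ j : Fin m, ∑ i ∈ Finset.univ.filter (fun i => f i = j), s i = B)


namespace VPCAux

lemma length_flatten_replicate {α : Type*} (n : ℕ) (l : List α) :
    ((List.replicate n l).flatten).length = n * l.length := by
  induction n with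
  | zero => simp
  | succ n ih =>
    rw [List.replicate_succ, List.flatten_cons, List.length_append, ih]
    ring


lemma getElem_flatten_replicate {α : Type*} {n j k : ℕ} (l : List α) (hj : j < n) (hk : k < l.length)
    (h : j * l.length + k < ((List.replicate n l).flatten).length) :
    ((List.replicate n l).flatten)[j * l.length + k] = l[k] := by
  induction j generalizing n with
  | zero =>
    obtain ⟨n', rfl⟩ : ∃ n', n = n'+1 := ⟨n-1, by omega⟩
    simp only [List.replicate_succ, List.flatten_cons] at h ⊢
    simpa using List.getElem_append_left (bs := (List.replicate n' l).flatten) hk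
  | succ j ih =>
    obtain ⟨n', rfl⟩ : ∃ n', n = n'+1 := ⟨n-1, by omega⟩
    simp only [List.replicate_succ, List.flatten_cons] at h ⊢
    have hge : l.length ≤ (j+1) * l.length + k := by
      calc l.length ≤ (j+1) * l.length := by nlinarith
      _ ≤ (j+1) * l.length + k := Nat.le_add_right _ _
    rw [List.getElem_append_right hge]
    have he : (j+1) * l.length + k - l.length = j * l.length + k := by
      have : (j+1) * l.length = j * l.length + l.length := by ring
      omega
    simp only [he]
    exact ih (by omega) (by rw [length_flatten_replicate]; rw [List.length_append, length_flatten_replicate] at h; nlinarith)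


end VPCAux

namespace VPCAux

lemma idx_lt {L j k j' k' : ℕ} (hk : k < L) (h : j < j') : j*L + k < j'*L + k' := by
  calc j*L + k < j*L + L := by omega
  _ = (j+1)*L := by ring
  _ ≤ j'*L := Nat.mul_le_mul_right _ h
  _ ≤ j'*L + k' := Nat.le_add_right _ _

lemma idx_le {L j k j' k' : ℕ} (hk' : k' < L) (h : j*L + k ≤ j'*L + k') : j ≤ j' := by
  by_contra hc
  push_neg at hc
  exact absurd h (by have := idx_lt (k := k') (k' := k) hk' hc; omega)

def slotL (B : ℕ) : List Op := openSeq ++ sumSeq B ++ closeSeq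

lemma length_sumSeq (B : ℕ) : (sumSeq B).length = 2*B := by
  rw [sumSeq, length_flatten_replicate]; simp; ring

lemma length_openSeq : openSeq.length = 6 := rfl
lemma length_closeSeq : closeSeq.length = 6 := rfl

lemma length_slotL (B : ℕ) : (slotL B).length = 2*B+12 := by
  simp only [slotL, List.length_append, length_sumSeq, length_openSeq, length_closeSeq]; omega

lemma length_os (B : ℕ) : (openSeq ++ sumSeq B).length = 2*B+6 := by
  simp only [List.length_append, length_sumSeq, length_openSeq]; omega

lemma length_P0 (m B : ℕ) : (P0 m B).length = m * (2*B+12) := by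
  rw [P0, length_flatten_replicate, ← length_slotL]; rfl

lemma P0_getElem (m B j k : ℕ) (hj : j < m) (hk : k < 2*B+12)
    (h : j*(2*B+12)+k < (P0 m B).length) :
    (P0 m B)[j*(2*B+12)+k] = (slotL B)[k]'(by rw [length_slotL]; exact hk) := by
  have h2 : j * (slotL B).length + k < ((List.replicate m (slotL B)).flatten).length := by
    rw [length_flatten_replicate, length_slotL]
    rw [length_P0] at h; exact h
  have := getElem_flatten_replicate (slotL B) hj (by rw [length_slotL]; exact hk) h2
  simp only [length_slotL] at this
  exact this

lemma sumSeq_getElem_even (B t : ℕ) (ht : t < B) (h : 2*t < (sumSeq B).length) :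
    (sumSeq B)[2*t] = Rd vb := by
  have he : (2:ℕ)*t = t * 2 + 0 := by ring
  simp only [sumSeq, he] at h ⊢
  have h2 : t * ([Rd vb, Rd vb'] : List Op).length + 0 <
      ((List.replicate B [Rd vb, Rd vb']).flatten).length := by simpa using h
  have := getElem_flatten_replicate [Rd vb, Rd vb'] ht (by simp) h2
  simpa using this

lemma sumSeq_getElem_odd (B t : ℕ) (ht : t < B) (h : 2*t+1 < (sumSeq B).length) :
    (sumSeq B)[2*t+1] = Rd vb' := by
  have he : (2:ℕ)*t+1 = t * 2 + 1 := by ring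
  simp only [sumSeq, he] at h ⊢
  have h2 : t * ([Rd vb, Rd vb'] : List Op).length + 1 <
      ((List.replicate B [Rd vb, Rd vb']).flatten).length := by simpa using h
  have := getElem_flatten_replicate [Rd vb, Rd vb'] ht (by simp) h2
  simpa using this

lemma slotL_a (B t : ℕ) (ht : t < 3) (h : 2*t+1 < (slotL B).length) :
    (slotL B)[2*t] = Rd va ∧ (slotL B)[2*t+1] = Rd va' := by
  have h1 : 2*t+1 < (openSeq ++ sumSeq B).length := by rw [length_os]; omega
  have h1' : 2*t+1 < openSeq.length := by rw [length_openSeq]; omega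
  have h0 : 2*t < (openSeq ++ sumSeq B).length := by rw [length_os]; omega
  have h0' : 2*t < openSeq.length := by rw [length_openSeq]; omega
  simp only [slotL]
  rw [List.getElem_append_left h1, List.getElem_append_left h1',
      List.getElem_append_left h0 (h' := by simp only [List.length_append, length_openSeq, length_sumSeq, length_closeSeq]; rw [length_slotL] at h; omega),
      List.getElem_append_left h0']
  interval_cases t <;> exact ⟨rfl, rfl⟩

lemma slotL_b (B t : ℕ) (ht : t < B) (h : 6+(2*t+1) < (slotL B).length) :
    (slotL B)[6+2*t] = Rd vb ∧ (slotL B)[6+(2*t+1)] = Rd vb' := by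
  have h1 : 6+2*t < (openSeq ++ sumSeq B).length := by rw [length_os]; omega
  have h2 : 6+(2*t+1) < (openSeq ++ sumSeq B).length := by rw [length_os]; omega
  simp only [slotL]
  rw [List.getElem_append_left h1 (h' := by simp only [List.length_append, length_openSeq, length_sumSeq, length_closeSeq]; rw [length_slotL] at h; omega),
      List.getElem_append_left h2,
      List.getElem_append_right (by rw [length_openSeq]; omega : openSeq.length ≤ 6+2*t),
      List.getElem_append_right (by rw [length_openSeq]; omega : openSeq.length ≤ 6+(2*t+1))]
  simp only [length_openSeq]
  constructor
  · simp only [show 6+2*t-6 = 2*t by omega]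
    exact sumSeq_getElem_even B t ht (by rw [length_sumSeq]; omega)
  · simp only [show 6+(2*t+1)-6 = 2*t+1 by omega]
    exact sumSeq_getElem_odd B t ht (by rw [length_sumSeq]; omega)

lemma slotL_c (B t : ℕ) (ht : t < 3) (h : 6+2*B+(2*t+1) < (slotL B).length) :
    (slotL B)[6+2*B+2*t] = Rd vc ∧ (slotL B)[6+2*B+(2*t+1)] = Rd vc' := by
  simp only [slotL]
  rw [List.getElem_append_right (by rw [length_os]; omega : (openSeq ++ sumSeq B).length ≤ 6+2*B+2*t)
        (h₂ := by simp only [List.length_append, length_openSeq, length_sumSeq, length_closeSeq]; rw [length_slotL] at h; omega),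
      List.getElem_append_right (by rw [length_os]; omega : (openSeq ++ sumSeq B).length ≤ 6+2*B+(2*t+1))]
  simp only [length_os]
  simp only [show 6+2*B+2*t-(2*B+6) = 2*t by omega, show 6+2*B+(2*t+1)-(2*B+6) = 2*t+1 by omega]
  interval_cases t <;> exact ⟨rfl, rfl⟩

lemma mem_P0 (m B : ℕ) (o : Op) (ho : o ∈ P0 m B) : o.isRead = true ∧ o.var = 0 := by
  rw [P0, List.mem_flatten] at ho
  obtain ⟨l, hl, hol⟩ := ho
  rw [List.mem_replicate] at hl
  rw [hl.2] at hol
  simp only [List.mem_append, openSeq, closeSeq, sumSeq, List.mem_flatten] at hol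
  rcases hol with (h | h) | h
  · simp only [List.mem_cons, List.not_mem_nil, or_false] at h
    rcases h with h|h|h|h|h|h <;> subst h <;> exact ⟨rfl, rfl⟩
  · obtain ⟨l', hl', ho'⟩ := h
    rw [List.mem_replicate] at hl'
    rw [hl'.2] at ho'
    simp only [List.mem_cons, List.not_mem_nil, or_false] at ho'
    rcases ho' with h|h <;> subst h <;> exact ⟨rfl, rfl⟩
  · simp only [List.mem_cons, List.not_mem_nil, or_false] at h
    rcases h with h|h|h|h|h|h <;> subst h <;> exact ⟨rfl, rfl⟩

lemma length_Pa (sz : ℕ) : (Pa sz).length = sz + 2 := by simp [Pa]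

lemma Pa_getElem_cases (sz k : ℕ) (hk : k < (Pa sz).length) :
    (k = 0 ∧ (Pa sz)[k] = Wr va') ∨ (1 ≤ k ∧ k ≤ sz ∧ (Pa sz)[k] = Wr vb') ∨
    (k = sz+1 ∧ (Pa sz)[k] = Wr vc') := by
  rw [length_Pa] at hk
  match k with
  | 0 => exact Or.inl ⟨rfl, rfl⟩
  | (k+1) =>
    simp only [Pa, List.getElem_cons_succ]
    by_cases hc : k < sz
    · refine Or.inr (Or.inl ⟨by omega, by omega, ?_⟩)
      rw [List.getElem_append_left (by simpa using hc)]
      exact List.getElem_replicate _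
    · have hks : k = sz := by omega
      subst hks
      refine Or.inr (Or.inr ⟨rfl, ?_⟩)
      rw [List.getElem_append_right (by simp)]
      simp

lemma mem_Pa (sz : ℕ) (o : Op) (ho : o ∈ Pa sz) : o.var = 0 := by
  simp only [Pa, List.mem_cons, List.mem_append, List.mem_replicate, List.mem_singleton,
    List.not_mem_nil, or_false] at ho
  rcases ho with h | ⟨_, h⟩ | h <;> subst h <;> rfl

end VPCAux
namespace VPCAux

variable {m B : ℕ} {s : Fin (3 * m) → ℕ}

lemma length_T (m B : ℕ) (s : Fin (3 * m) → ℕ) :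
    (reductionTrace m B s).length = 3*m+4 := by
  simp [reductionTrace]

lemma T_getElem_zero (h : 0 < (reductionTrace m B s).length) :
    (reductionTrace m B s)[0] = P0 m B := rfl

lemma T_getElem_succ (i : Fin (3*m)) (h : i.val+1 < (reductionTrace m B s).length) :
    (reductionTrace m B s)[i.val+1] = Pa (s i) := by
  show (P0 m B :: _)[i.val+1] = _
  refine (List.getElem_cons_succ (h := h)).trans ?_
  rw [List.getElem_append_left (by simpa using i.isLt)]
  simp

lemma pos_ext (p q : Pos (reductionTrace m B s)) (h1 : p.1.val = q.1.val)
    (h2 : p.2.val = q.2.val) : p = q := by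
  rcases p with ⟨⟨a, ha⟩, b⟩
  rcases q with ⟨⟨a', ha'⟩, b'⟩
  simp only at h1
  subst h1
  simp only at h2
  exact congrArg _ (Fin.ext h2)

lemma opAt_eq (p : Pos (reductionTrace m B s)) :
    opAt p = ((reductionTrace m B s)[p.1.val]'(p.1.isLt))[p.2.val]'(by
      have := p.2.isLt; simpa [List.get_eq_getElem] using this) := rfl

/-! ### Position constructors -/

def slotRd (m B : ℕ) (s : Fin (3 * m) → ℕ) (j : Fin m) (k : ℕ) (hk : k < 2*B+12) :
    Pos (reductionTrace m B s) :=
  ⟨⟨0, by rw [length_T]; omega⟩,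
   ⟨j.val*(2*B+12)+k, by
      show _ < (P0 m B).length
      rw [length_P0]
      calc j.val*(2*B+12)+k < (j.val+1)*(2*B+12) := by rw [add_mul]; omega
      _ ≤ m*(2*B+12) := Nat.mul_le_mul_right _ j.isLt⟩⟩

lemma opAt_slotRd (j : Fin m) (k : ℕ) (hk : k < 2*B+12) :
    opAt (slotRd m B s j k hk) = (slotL B)[k]'(by rw [length_slotL]; exact hk) := by
  rw [opAt_eq]
  exact P0_getElem m B j.val k j.isLt hk _

def wA' (m B : ℕ) (s : Fin (3 * m) → ℕ) (i : Fin (3*m)) : Pos (reductionTrace m B s) :=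
  ⟨⟨i.val+1, by rw [length_T]; omega⟩,
   ⟨0, by rw [List.get_eq_getElem, T_getElem_succ i, length_Pa]; omega⟩⟩


def wB' (m B : ℕ) (s : Fin (3 * m) → ℕ) (i : Fin (3*m)) (k : Fin (s i)) :
    Pos (reductionTrace m B s) :=
  ⟨⟨i.val+1, by rw [length_T]; omega⟩,
   ⟨k.val+1, by rw [List.get_eq_getElem, T_getElem_succ i, length_Pa]; have := k.isLt; omega⟩⟩

def wC' (m B : ℕ) (s : Fin (3 * m) → ℕ) (i : Fin (3*m)) : Pos (reductionTrace m B s) :=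
  ⟨⟨i.val+1, by rw [length_T]; omega⟩,
   ⟨s i + 1, by rw [List.get_eq_getElem, T_getElem_succ i, length_Pa]; omega⟩⟩

lemma opAt_wA' (i : Fin (3*m)) : opAt (wA' m B s i) = Wr va' := by
  rw [opAt_eq]
  simp only [wA', T_getElem_succ i]
  rfl

lemma opAt_wB' (i : Fin (3*m)) (k : Fin (s i)) : opAt (wB' m B s i k) = Wr vb' := by
  rw [opAt_eq]
  simp only [wB', T_getElem_succ i, Pa, List.getElem_cons_succ]
  rw [List.getElem_append_left (by simpa using k.isLt)]
  exact List.getElem_replicate _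

lemma opAt_wC' (i : Fin (3*m)) : opAt (wC' m B s i) = Wr vc' := by
  rw [opAt_eq]
  simp only [wC', T_getElem_succ i, Pa, List.getElem_cons_succ]
  rw [List.getElem_append_right (by simp)]
  simp

lemma var_all (p : Pos (reductionTrace m B s)) : (opAt p).var = 0 := by
  rw [opAt_eq]
  rcases p with ⟨⟨a, ha⟩, b⟩
  have hb := b.isLt
  have ha' := ha
  rw [length_T] at ha'
  rcases Nat.lt_or_ge a 1 with h1 | h1
  · have : a = 0 := by omega
    subst this
    simp only [T_getElem_zero]
    exact (mem_P0 m B _ (List.getElem_mem _)).2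
  obtain ⟨a', rfl⟩ : ∃ a', a = a' + 1 := ⟨a-1, by omega⟩
  rcases Nat.lt_or_ge a' (3*m) with h2 | h2
  · simp only [T_getElem_succ ⟨a', h2⟩]
    exact mem_Pa _ _ (List.getElem_mem _)
  · have hlt : a' - 3*m < 3 := by omega
    have hrep : (reductionTrace m B s)[a'+1]'ha =
        ([List.replicate (3*m) (Wr va), List.replicate (m*B) (Wr vb),
          List.replicate (3*m) (Wr vc)] : List (List Op))[a'-3*m]'(by simpa using hlt) := by
      show (P0 m B :: _)[a'+1]'ha = _
      refine (List.getElem_cons_succ (h := ha)).trans ?_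
      rw [List.getElem_append_right (by simpa using h2)]
      simp only [List.length_ofFn]
    rcases (by omega : a' - 3*m = 0 ∨ a' - 3*m = 1 ∨ a' - 3*m = 2) with h|h|h <;>
        simp only [h, List.getElem_cons_zero, List.getElem_cons_succ] at hrep <;>
        simp only [hrep] at hb ⊢ <;> rw [List.getElem_replicate] <;> rfl

end VPCAux
namespace VPCAux

variable {m B : ℕ} {s : Fin (3 * m) → ℕ}

lemma write_class (q : Pos (reductionTrace m B s)) (hw : (opAt q).isRead = false) :
    (∃ i, q = wA' m B s i) ∨ (∃ i k, q = wB' m B s i k) ∨ (∃ i, q = wC' m B s i) ∨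
    (opAt q).val = va ∨ (opAt q).val = vb ∨ (opAt q).val = vc := by
  rw [opAt_eq] at hw ⊢
  rcases q with ⟨⟨a, ha⟩, b⟩
  have hb := b.isLt
  have ha' := ha
  rw [length_T] at ha'
  simp only at hw hb ⊢
  rcases Nat.lt_or_ge a 1 with h1 | h1
  · exfalso
    have : a = 0 := by omega
    subst this
    simp only [T_getElem_zero] at hw
    rw [(mem_P0 m B _ (List.getElem_mem _)).1] at hw
    exact Bool.noConfusion hw
  obtain ⟨a', rfl⟩ : ∃ a', a = a' + 1 := ⟨a-1, by omega⟩
  rcases Nat.lt_or_ge a' (3*m) with h2 | h2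
  · set i : Fin (3*m) := ⟨a', h2⟩ with hi
    have hbi : b.val < (Pa (s i)).length := by
      have := b.isLt
      simp only [List.get_eq_getElem, T_getElem_succ i] at this
      exact this.trans_eq (congrArg List.length (T_getElem_succ i ha))
    rcases Pa_getElem_cases (s i) b.val hbi with ⟨hb0, _⟩ | ⟨hb1, hb2, _⟩ | ⟨hb3, _⟩
    · exact Or.inl ⟨i, pos_ext _ _ rfl hb0⟩
    · refine Or.inr (Or.inl ⟨i, ⟨b.val - 1, by omega⟩, pos_ext _ _ rfl (by simp [wB']; omega)⟩)
    · exact Or.inr (Or.inr (Or.inl ⟨i, pos_ext _ _ rfl hb3⟩))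
  · have hlt : a' - 3*m < 3 := by omega
    have hrep : (reductionTrace m B s)[a'+1]'ha =
        ([List.replicate (3*m) (Wr va), List.replicate (m*B) (Wr vb),
          List.replicate (3*m) (Wr vc)] : List (List Op))[a'-3*m]'(by simpa using hlt) := by
      show (P0 m B :: _)[a'+1]'ha = _
      refine (List.getElem_cons_succ (h := ha)).trans ?_
      rw [List.getElem_append_right (by simpa using h2)]
      simp only [List.length_ofFn]
    refine Or.inr (Or.inr (Or.inr ?_))
    rcases (by omega : a' - 3*m = 0 ∨ a' - 3*m = 1 ∨ a' - 3*m = 2) with h|h|h <;>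
        simp only [h, List.getElem_cons_zero, List.getElem_cons_succ] at hrep <;>
        simp only [hrep] at hb ⊢ <;> rw [List.getElem_replicate]
    · exact Or.inl rfl
    · exact Or.inr (Or.inl rfl)
    · exact Or.inr (Or.inr rfl)

def ReadsF (σ : Pos (reductionTrace m B s) → ℕ) (r w : Pos (reductionTrace m B s)) : Prop :=
  (opAt r).isRead = true ∧ (opAt w).isRead = false ∧ σ w < σ r ∧
  (opAt w).val = (opAt r).val ∧
  ∀ q', (opAt q').isRead = false → σ w < σ q' → ¬ σ q' < σ r

lemma exists_reader (σ : Pos (reductionTrace m B s) → ℕ)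
    (hσ : LegalSched (reductionTrace m B s) σ) (r : Pos (reductionTrace m B s))
    (h : (opAt r).isRead = true) : ∃ w, ReadsF σ r w := by
  obtain ⟨q, h1, h2, h3, h4, h5⟩ := hσ.2.2 r h
  exact ⟨q, h, h1, h2, h4, fun q' hq1 hq2 => h5 q' hq1 (by rw [var_all, var_all]) hq2⟩

lemma readOrder {σ : Pos (reductionTrace m B s) → ℕ}
    (hσ : LegalSched (reductionTrace m B s) σ) {r1 w1 r2 w2}
    (h1 : ReadsF σ r1 w1) (h2 : ReadsF σ r2 w2) (hlt : σ w1 < σ w2) : σ r1 < σ r2 := by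
  have hn : ¬ σ w2 < σ r1 := h1.2.2.2.2 w2 h2.2.1 hlt
  have hne : σ r1 ≠ σ w2 := by
    intro he
    have hrw : r1 = w2 := hσ.1 he
    have := h1.1
    rw [hrw, h2.2.1] at this
    exact Bool.noConfusion this
  have : σ r1 < σ w2 := by omega
  exact lt_trans this h2.2.2.1

lemma mid_sep {σ : Pos (reductionTrace m B s) → ℕ}
    (hσ : LegalSched (reductionTrace m B s) σ) {r1 w1 r2 w2 rm wm}
    (h1 : ReadsF σ r1 w1) (h2 : ReadsF σ r2 w2) (hm : ReadsF σ rm wm)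
    (o1 : σ r1 < σ rm) (o2 : σ rm < σ r2) (hvne : σ w1 ≠ σ wm) : σ w1 ≠ σ w2 := by
  intro he
  rcases Nat.lt_or_ge (σ wm) (σ w1) with hc | hc
  · exact hm.2.2.2.2 w1 h1.2.1 hc (lt_trans h1.2.2.1 o1)
  · have hc' : σ w2 < σ wm := by omega
    exact h2.2.2.2.2 wm hm.2.1 hc' (lt_trans hm.2.2.1 o2)

lemma sigma_ne {σ : Pos (reductionTrace m B s) → ℕ}
    (hσ : LegalSched (reductionTrace m B s) σ) {p q : Pos (reductionTrace m B s)}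
    (h : (opAt p).val ≠ (opAt q).val) : σ p ≠ σ q := fun he => h (by rw [hσ.1 he])

lemma sig_slotRd_lt {σ : Pos (reductionTrace m B s) → ℕ}
    (hσ : LegalSched (reductionTrace m B s) σ) {j j' : Fin m} {k k' : ℕ} (hk : k < 2*B+12)
    (hk' : k' < 2*B+12) (h : j.val*(2*B+12)+k < j'.val*(2*B+12)+k') :
    σ (slotRd m B s j k hk) < σ (slotRd m B s j' k' hk') := hσ.2.1 _ _ rfl h

lemma sig_slotRd_rev {σ : Pos (reductionTrace m B s) → ℕ}
    (hσ : LegalSched (reductionTrace m B s) σ) {j j' : Fin m} {k k' : ℕ} (hk : k < 2*B+12)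
    (hk' : k' < 2*B+12) (h : σ (slotRd m B s j k hk) < σ (slotRd m B s j' k' hk')) :
    j.val*(2*B+12)+k < j'.val*(2*B+12)+k' := by
  rcases Nat.lt_trichotomy (j.val*(2*B+12)+k) (j'.val*(2*B+12)+k') with hc|hc|hc
  · exact hc
  · exfalso
    have : slotRd m B s j k hk = slotRd m B s j' k' hk' := pos_ext _ _ rfl hc
    rw [this] at h
    omega
  · exfalso
    have := sig_slotRd_lt hσ hk' hk hc
    omega

lemma exists_rA (σ : Pos (reductionTrace m B s) → ℕ)
    (hσ : LegalSched (reductionTrace m B s) σ) (j : Fin m) (t : ℕ) (ht : t < 3) :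
    ∃ i : Fin (3*m), ReadsF σ (slotRd m B s j (2*t+1) (by omega)) (wA' m B s i) := by
  have hsl := slotL_a B t ht (by rw [length_slotL]; omega)
  have hr : (opAt (slotRd m B s j (2*t+1) (by omega))).isRead = true := by
    rw [opAt_slotRd, hsl.2]; rfl
  obtain ⟨w, hw⟩ := exists_reader σ hσ _ hr
  have hval : (opAt w).val = va' := by
    rw [hw.2.2.2.1, opAt_slotRd, hsl.2]; rfl
  rcases write_class w hw.2.1 with ⟨i, rfl⟩ | ⟨i, k, rfl⟩ | ⟨i, rfl⟩ | h | h | h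
  · exact ⟨i, hw⟩
  · rw [opAt_wB'] at hval; exact absurd hval (by simp [Wr, vb', va'])
  · rw [opAt_wC'] at hval; exact absurd hval (by simp [Wr, vc', va'])
  · rw [hval] at h; exact absurd h (by simp [va, va'])
  · rw [hval] at h; exact absurd h (by simp [vb, va'])
  · rw [hval] at h; exact absurd h (by simp [vc, va'])

lemma exists_rB (σ : Pos (reductionTrace m B s) → ℕ)
    (hσ : LegalSched (reductionTrace m B s) σ) (j : Fin m) (t : ℕ) (ht : t < B) :
    ∃ p : Σ i : Fin (3*m), Fin (s i),
      ReadsF σ (slotRd m B s j (6+(2*t+1)) (by omega)) (wB' m B s p.1 p.2) := by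
  have hsl := slotL_b B t ht (by rw [length_slotL]; omega)
  have hr : (opAt (slotRd m B s j (6+(2*t+1)) (by omega))).isRead = true := by
    rw [opAt_slotRd, hsl.2]; rfl
  obtain ⟨w, hw⟩ := exists_reader σ hσ _ hr
  have hval : (opAt w).val = vb' := by
    rw [hw.2.2.2.1, opAt_slotRd, hsl.2]; rfl
  rcases write_class w hw.2.1 with ⟨i, rfl⟩ | ⟨i, k, rfl⟩ | ⟨i, rfl⟩ | h | h | h
  · rw [opAt_wA'] at hval; exact absurd hval (by simp [Wr, va', vb'])
  · exact ⟨⟨i, k⟩, hw⟩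
  · rw [opAt_wC'] at hval; exact absurd hval (by simp [Wr, vc', vb'])
  · rw [hval] at h; exact absurd h (by simp [va, vb'])
  · rw [hval] at h; exact absurd h (by simp [vb, vb'])
  · rw [hval] at h; exact absurd h (by simp [vc, vb'])

lemma exists_rC (σ : Pos (reductionTrace m B s) → ℕ)
    (hσ : LegalSched (reductionTrace m B s) σ) (j : Fin m) (t : ℕ) (ht : t < 3) :
    ∃ i : Fin (3*m), ReadsF σ (slotRd m B s j (6+2*B+(2*t+1)) (by omega)) (wC' m B s i) := by
  have hsl := slotL_c B t ht (by rw [length_slotL]; omega)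
  have hr : (opAt (slotRd m B s j (6+2*B+(2*t+1)) (by omega))).isRead = true := by
    rw [opAt_slotRd, hsl.2]; rfl
  obtain ⟨w, hw⟩ := exists_reader σ hσ _ hr
  have hval : (opAt w).val = vc' := by
    rw [hw.2.2.2.1, opAt_slotRd, hsl.2]; rfl
  rcases write_class w hw.2.1 with ⟨i, rfl⟩ | ⟨i, k, rfl⟩ | ⟨i, rfl⟩ | h | h | h
  · rw [opAt_wA'] at hval; exact absurd hval (by simp [Wr, va', vc'])
  · rw [opAt_wB'] at hval; exact absurd hval (by simp [Wr, vb', vc'])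
  · exact ⟨i, hw⟩
  · rw [hval] at h; exact absurd h (by simp [va, vc'])
  · rw [hval] at h; exact absurd h (by simp [vb, vc'])
  · rw [hval] at h; exact absurd h (by simp [vc, vc'])

lemma exists_rmid_a (σ : Pos (reductionTrace m B s) → ℕ)
    (hσ : LegalSched (reductionTrace m B s) σ) (j : Fin m) (t : ℕ) (ht : t < 3) :
    ∃ w, ReadsF σ (slotRd m B s j (2*t) (by omega)) w ∧ (opAt w).val = va := by
  have hsl := slotL_a B t ht (by rw [length_slotL]; omega)
  have hr : (opAt (slotRd m B s j (2*t) (by omega))).isRead = true := by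
    rw [opAt_slotRd, hsl.1]; rfl
  obtain ⟨w, hw⟩ := exists_reader σ hσ _ hr
  exact ⟨w, hw, by rw [hw.2.2.2.1, opAt_slotRd, hsl.1]; rfl⟩

lemma exists_rmid_b (σ : Pos (reductionTrace m B s) → ℕ)
    (hσ : LegalSched (reductionTrace m B s) σ) (j : Fin m) (t : ℕ) (ht : t < B) :
    ∃ w, ReadsF σ (slotRd m B s j (6+2*t) (by omega)) w ∧ (opAt w).val = vb := by
  have hsl := slotL_b B t ht (by rw [length_slotL]; omega)
  have hr : (opAt (slotRd m B s j (6+2*t) (by omega))).isRead = true := by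
    rw [opAt_slotRd, hsl.1]; rfl
  obtain ⟨w, hw⟩ := exists_reader σ hσ _ hr
  exact ⟨w, hw, by rw [hw.2.2.2.1, opAt_slotRd, hsl.1]; rfl⟩

lemma exists_rmid_c (σ : Pos (reductionTrace m B s) → ℕ)
    (hσ : LegalSched (reductionTrace m B s) σ) (j : Fin m) (t : ℕ) (ht : t < 3) :
    ∃ w, ReadsF σ (slotRd m B s j (6+2*B+2*t) (by omega)) w ∧ (opAt w).val = vc := by
  have hsl := slotL_c B t ht (by rw [length_slotL]; omega)
  have hr : (opAt (slotRd m B s j (6+2*B+2*t) (by omega))).isRead = true := by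
    rw [opAt_slotRd, hsl.1]; rfl
  obtain ⟨w, hw⟩ := exists_reader σ hσ _ hr
  exact ⟨w, hw, by rw [hw.2.2.2.1, opAt_slotRd, hsl.1]; rfl⟩

end VPCAux
namespace VPCAux

variable {m B : ℕ} {s : Fin (3 * m) → ℕ}

/-- Injectivity core: two distinct P0 reads in lexicographically ordered slots/positions
reading writes with distinct σ. -/
lemma inj_core {σ : Pos (reductionTrace m B s) → ℕ}
    (hσ : LegalSched (reductionTrace m B s) σ)
    {j1 j2 : Fin m} {k1 k2 km : ℕ} {hk1 : k1 < 2*B+12} {hk2 : k2 < 2*B+12} {hkm : km < 2*B+12}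
    {w1 w2 wm : Pos (reductionTrace m B s)}
    (h1 : ReadsF σ (slotRd m B s j1 k1 hk1) w1)
    (h2 : ReadsF σ (slotRd m B s j2 k2 hk2) w2)
    (hm : ReadsF σ (slotRd m B s j2 km hkm) wm)
    (hik : j1.val*(2*B+12)+k1 < j2.val*(2*B+12)+km) (hkm2 : km < k2)
    (hvne : (opAt w1).val ≠ (opAt wm).val) : σ w1 ≠ σ w2 := by
  refine mid_sep hσ h1 h2 hm ?_ ?_ (sigma_ne hσ hvne)
  · exact sig_slotRd_lt hσ hk1 hkm hik
  · exact sig_slotRd_lt hσ hkm hk2 (by omega)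

theorem main_sol (m B : ℕ) (s : Fin (3 * m) → ℕ)
    (hsum : ∑ i, s i = m * B)
    (σ : Pos (reductionTrace m B s) → ℕ)
    (hσ : LegalSched (reductionTrace m B s) σ) : ThreePartSol m B s := by
  classical
  -- choose the writes read by each special read
  choose A hA using fun (j : Fin m) (t : Fin 3) => exists_rA σ hσ j t.val t.isLt
  choose F hF using fun (j : Fin m) (t : Fin B) => exists_rB σ hσ j t.val t.isLt
  choose C hC using fun (j : Fin m) (t : Fin 3) => exists_rC σ hσ j t.val t.isLt
  -- injectivity of the three maps
  have keyA : ∀ u v : Fin m × Fin 3,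
      (u.1.val < v.1.val ∨ (u.1 = v.1 ∧ u.2.val < v.2.val)) → A u.1 u.2 ≠ A v.1 v.2 := by
    intro u v hlex heq
    obtain ⟨wm, hwm, hvm⟩ := exists_rmid_a σ hσ v.1 v.2.val v.2.isLt
    have hik : u.1.val*(2*B+12)+(2*u.2.val+1) < v.1.val*(2*B+12)+2*v.2.val := by
      rcases hlex with h | ⟨he, h⟩
      · exact idx_lt (by have := u.2.isLt; omega) h
      · rw [he]; exact Nat.add_lt_add_left (by omega) _
    have := inj_core hσ (hA u.1 u.2) (hA v.1 v.2) hwm hik (by omega)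
      (by rw [opAt_wA', hvm]; simp [Wr, va, va'])
    exact this (by rw [heq])
  have keyF : ∀ u v : Fin m × Fin B,
      (u.1.val < v.1.val ∨ (u.1 = v.1 ∧ u.2.val < v.2.val)) → F u.1 u.2 ≠ F v.1 v.2 := by
    intro u v hlex heq
    obtain ⟨wm, hwm, hvm⟩ := exists_rmid_b σ hσ v.1 v.2.val v.2.isLt
    have hik : u.1.val*(2*B+12)+(6+(2*u.2.val+1)) < v.1.val*(2*B+12)+(6+2*v.2.val) := by
      rcases hlex with h | ⟨he, h⟩
      · exact idx_lt (by have := u.2.isLt; omega) h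
      · rw [he]; exact Nat.add_lt_add_left (by omega) _
    have := inj_core hσ (hF u.1 u.2) (hF v.1 v.2) hwm hik (by omega)
      (by rw [opAt_wB', hvm]; simp [Wr, vb, vb'])
    exact this (by rw [heq])
  have keyC : ∀ u v : Fin m × Fin 3,
      (u.1.val < v.1.val ∨ (u.1 = v.1 ∧ u.2.val < v.2.val)) → C u.1 u.2 ≠ C v.1 v.2 := by
    intro u v hlex heq
    obtain ⟨wm, hwm, hvm⟩ := exists_rmid_c σ hσ v.1 v.2.val v.2.isLt
    have hik : u.1.val*(2*B+12)+(6+2*B+(2*u.2.val+1)) < v.1.val*(2*B+12)+(6+2*B+2*v.2.val) := by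
      rcases hlex with h | ⟨he, h⟩
      · exact idx_lt (by have := u.2.isLt; omega) h
      · rw [he]; exact Nat.add_lt_add_left (by omega) _
    have := inj_core hσ (hC u.1 u.2) (hC v.1 v.2) hwm hik (by omega)
      (by rw [opAt_wC', hvm]; simp [Wr, vc, vc'])
    exact this (by rw [heq])
  have lex_total : ∀ {n : ℕ} (u v : Fin m × Fin n), u ≠ v →
      (u.1.val < v.1.val ∨ (u.1 = v.1 ∧ u.2.val < v.2.val)) ∨
      (v.1.val < u.1.val ∨ (v.1 = u.1 ∧ v.2.val < u.2.val)) := by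
    intro n u v hne
    rcases Nat.lt_trichotomy u.1.val v.1.val with h|h|h
    · exact Or.inl (Or.inl h)
    · have he : u.1 = v.1 := Fin.ext h
      rcases Nat.lt_trichotomy u.2.val v.2.val with h2|h2|h2
      · exact Or.inl (Or.inr ⟨he, h2⟩)
      · exact absurd (Prod.ext he (Fin.ext h2)) hne
      · exact Or.inr (Or.inr ⟨he.symm, h2⟩)
    · exact Or.inr (Or.inl h)
  have hAinj : Function.Injective (fun q : Fin m × Fin 3 => A q.1 q.2) := by
    intro u v he
    by_contra hne
    rcases lex_total u v hne with h | h
    · exact keyA u v h he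
    · exact keyA v u h he.symm
  have hFinj : Function.Injective (fun q : Fin m × Fin B => F q.1 q.2) := by
    intro u v he
    by_contra hne
    rcases lex_total u v hne with h | h
    · exact keyF u v h he
    · exact keyF v u h he.symm
  have hCinj : Function.Injective (fun q : Fin m × Fin 3 => C q.1 q.2) := by
    intro u v he
    by_contra hne
    rcases lex_total u v hne with h | h
    · exact keyC u v h he
    · exact keyC v u h he.symm
  have hAbij : Function.Bijective (fun q : Fin m × Fin 3 => A q.1 q.2) :=
    (Fintype.bijective_iff_injective_and_card _).2 ⟨hAinj, by simp [mul_comm]⟩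
  have hCbij : Function.Bijective (fun q : Fin m × Fin 3 => C q.1 q.2) :=
    (Fintype.bijective_iff_injective_and_card _).2 ⟨hCinj, by simp [mul_comm]⟩
  have hFbij : Function.Bijective (fun q : Fin m × Fin B => F q.1 q.2) :=
    (Fintype.bijective_iff_injective_and_card _).2 ⟨hFinj, by
      simp [Fintype.card_sigma, hsum]⟩
  set eA := Equiv.ofBijective _ hAbij with heA
  set eC := Equiv.ofBijective _ hCbij with heC
  set eF := Equiv.ofBijective _ hFbij with heF
  set α : Fin (3*m) → Fin m := fun i => (eA.symm i).1 with hα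
  set γ : Fin (3*m) → Fin m := fun i => (eC.symm i).1 with hγ
  -- readers of the a' and c' writes of process i
  have hArd : ∀ i : Fin (3*m), ReadsF σ
      (slotRd m B s (α i) (2*(eA.symm i).2.val+1) (by have := (eA.symm i).2.isLt; omega))
      (wA' m B s i) := by
    intro i
    have h1 := hA (eA.symm i).1 (eA.symm i).2
    have h2 : A (eA.symm i).1 (eA.symm i).2 = i := eA.apply_symm_apply i
    rw [h2] at h1
    exact h1
  have hCrd : ∀ i : Fin (3*m), ReadsF σ
      (slotRd m B s (γ i) (6+2*B+(2*(eC.symm i).2.val+1)) (by have := (eC.symm i).2.isLt; omega))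
      (wC' m B s i) := by
    intro i
    have h1 := hC (eC.symm i).1 (eC.symm i).2
    have h2 : C (eC.symm i).1 (eC.symm i).2 = i := eC.apply_symm_apply i
    rw [h2] at h1
    exact h1
  -- ordering facts
  have hαle : ∀ (j : Fin m) (t : Fin B), (α (F j t).1).val ≤ j.val := by
    intro j t
    have h1 := hArd (F j t).1
    have h2 := hF j t
    have hlt : σ (wA' m B s (F j t).1) < σ (wB' m B s (F j t).1 (F j t).2) :=
      hσ.2.1 _ _ rfl (Nat.succ_pos _)
    have hro := readOrder hσ h1 h2 hlt
    have hidx := sig_slotRd_rev hσ _ _ hro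
    exact idx_le (by have := t.isLt; omega) hidx.le
  have hγge : ∀ (j : Fin m) (t : Fin B), j.val ≤ (γ (F j t).1).val := by
    intro j t
    have h1 := hF j t
    have h2 := hCrd (F j t).1
    have hlt : σ (wB' m B s (F j t).1 (F j t).2) < σ (wC' m B s (F j t).1) :=
      hσ.2.1 _ _ rfl (Nat.add_lt_add_right (F j t).2.isLt 1)
    have hro := readOrder hσ h1 h2 hlt
    have hidx := sig_slotRd_rev hσ _ _ hro
    exact idx_le (by have := (eC.symm (F j t).1).2.isLt; omega) hidx.le
  have hαγ : ∀ i : Fin (3*m), (α i).val ≤ (γ i).val := by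
    intro i
    have h1 := hArd i
    have h2 := hCrd i
    have hlt : σ (wA' m B s i) < σ (wC' m B s i) :=
      hσ.2.1 _ _ rfl (Nat.succ_pos _)
    have hro := readOrder hσ h1 h2 hlt
    have hidx := sig_slotRd_rev hσ _ _ hro
    exact idx_le (by have := (eC.symm i).2.isLt; omega) hidx.le
  -- fiber cardinalities
  have prodcard : ∀ (n : ℕ) (j : Fin m),
      (Finset.univ.filter fun q : Fin m × Fin n => q.1 = j).card = n := by
    intro n j
    have hb : (Finset.univ.filter fun q : Fin m × Fin n => q.1 = j).card
        = (Finset.univ : Finset (Fin n)).card := by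
      refine Finset.card_bij' (fun q _ => q.2) (fun t _ => (j, t)) ?_ ?_ ?_ ?_
      · intro a _; exact Finset.mem_univ _
      · intro t _; simp
      · intro a ha
        obtain ⟨a1, a2⟩ := a
        simp only [Finset.mem_filter, Finset.mem_univ, true_and] at ha
        subst ha
        rfl
      · intro t _; rfl
    rw [hb]
    simp
  have hcardA : ∀ j : Fin m, (Finset.univ.filter fun i => α i = j).card = 3 := by
    intro j
    have hb : (Finset.univ.filter fun i => α i = j).card
        = (Finset.univ.filter fun q : Fin m × Fin 3 => q.1 = j).card := by
      refine Finset.card_bij' (fun i _ => eA.symm i) (fun q _ => eA q) ?_ ?_ ?_ ?_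
      · intro i hi
        simp only [Finset.mem_filter, Finset.mem_univ, true_and] at hi ⊢
        exact hi
      · intro q hq
        simp only [Finset.mem_filter, Finset.mem_univ, true_and] at hq ⊢
        show (eA.symm (eA q)).1 = j
        rw [Equiv.symm_apply_apply]
        exact hq
      · intro i _; exact eA.apply_symm_apply i
      · intro q _; exact eA.symm_apply_apply q
    rw [hb]
    exact prodcard 3 j
  have hcardC : ∀ j : Fin m, (Finset.univ.filter fun i => γ i = j).card = 3 := by
    intro j
    have hb : (Finset.univ.filter fun i => γ i = j).card
        = (Finset.univ.filter fun q : Fin m × Fin 3 => q.1 = j).card := by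
      refine Finset.card_bij' (fun i _ => eC.symm i) (fun q _ => eC q) ?_ ?_ ?_ ?_
      · intro i hi
        simp only [Finset.mem_filter, Finset.mem_univ, true_and] at hi ⊢
        exact hi
      · intro q hq
        simp only [Finset.mem_filter, Finset.mem_univ, true_and] at hq ⊢
        show (eC.symm (eC q)).1 = j
        rw [Equiv.symm_apply_apply]
        exact hq
      · intro i _; exact eC.apply_symm_apply i
      · intro q _; exact eC.symm_apply_apply q
    rw [hb]
    exact prodcard 3 j
  -- cumulative counting gives γ = α
  have cum : ∀ (f : Fin (3*m) → Fin m),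
      (∀ j : Fin m, (Finset.univ.filter fun i => f i = j).card = 3) → ∀ n : ℕ,
      (Finset.univ.filter fun i => (f i).val ≤ n).card
        = 3 * (Finset.univ.filter fun j : Fin m => j.val ≤ n).card := by
    intro f hf n
    rw [Finset.card_eq_sum_card_fiberwise
      (f := f) (t := Finset.univ.filter fun j : Fin m => j.val ≤ n)
      (by intro i hi; simp only [Finset.mem_coe, Finset.mem_filter, Finset.mem_univ, true_and] at hi ⊢; exact hi)]
    rw [Finset.sum_congr rfl (fun j hj => ?_), Finset.sum_const, smul_eq_mul, mul_comm]
    have hje : (Finset.univ.filter fun i => (f i).val ≤ n).filter (fun i => f i = j)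
        = Finset.univ.filter fun i => f i = j := by
      ext i
      simp only [Finset.mem_filter, Finset.mem_univ, true_and] at hj ⊢
      constructor
      · rintro ⟨_, h⟩; exact h
      · intro h; exact ⟨by rw [h]; exact hj, h⟩
    rw [hje, hf j]
  have hγα : ∀ i, γ i = α i := by
    have hsets : ∀ n : ℕ, (Finset.univ.filter fun i => (γ i).val ≤ n)
        = Finset.univ.filter fun i => (α i).val ≤ n := by
      intro n
      refine Finset.eq_of_subset_of_card_le ?_ ?_
      · intro i hi
        simp only [Finset.mem_filter, Finset.mem_univ, true_and] at hi ⊢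
        exact le_trans (hαγ i) hi
      · rw [cum α hcardA n, cum γ hcardC n]
    intro i
    have hi : i ∈ Finset.univ.filter fun i' => (α i').val ≤ (α i).val := by simp
    rw [← hsets] at hi
    simp only [Finset.mem_filter, Finset.mem_univ, true_and] at hi
    exact Fin.ext (le_antisymm hi (hαγ i))
  -- every b'-write of process i is read in slot α i
  have hFprop : ∀ q : Fin m × Fin B, α (F q.1 q.2).1 = q.1 := by
    intro q
    refine Fin.ext (le_antisymm (hαle q.1 q.2) ?_)
    have h2 := hγge q.1 q.2
    rw [hγα] at h2
    exact h2
  -- conclude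
  refine ⟨α, hcardA, ?_⟩
  intro j
  have hsum1 : ∑ i ∈ Finset.univ.filter (fun i => α i = j), s i
      = (Finset.univ.filter (fun p : Σ i : Fin (3*m), Fin (s i) => α p.1 = j)).card := by
    have he : (Finset.univ.filter (fun p : Σ i : Fin (3*m), Fin (s i) => α p.1 = j))
        = (Finset.univ.filter (fun i => α i = j)).sigma (fun _ => Finset.univ) := by
      ext p
      simp [Finset.mem_sigma]
    rw [he, Finset.card_sigma]
    simp
  have hsum2 : (Finset.univ.filter (fun p : Σ i : Fin (3*m), Fin (s i) => α p.1 = j)).card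
      = (Finset.univ.filter (fun q : Fin m × Fin B => q.1 = j)).card := by
    refine Finset.card_bij' (fun p _ => eF.symm p) (fun q _ => eF q) ?_ ?_ ?_ ?_
    · intro p hp
      simp only [Finset.mem_filter, Finset.mem_univ, true_and] at hp ⊢
      have h1 := hFprop (eF.symm p)
      have h2 : F (eF.symm p).1 (eF.symm p).2 = p := eF.apply_symm_apply p
      rw [h2] at h1
      rw [← h1]
      exact hp
    · intro q hq
      simp only [Finset.mem_filter, Finset.mem_univ, true_and] at hq ⊢
      have := hFprop q
      rw [← hq]
      exact this
    · intro p _; exact eF.apply_symm_apply p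
    · intro q _; exact eF.symm_apply_apply q
  rw [hsum1, hsum2]
  exact prodcard B j

end VPCAux

/-- Soundness of the reduction: if the reduction trace admits a legal schedule
respecting program order, then (the triples of processes opened in each slot sequence
sum to exactly `B`, and consequently) the Unary 3-Partition instance has a solution. -/
theorem stmt12 (m B : ℕ) (s : Fin (3 * m) → ℕ) (hm : 0 < m)
    (hsize : ∀ i, B < 4 * s i ∧ 2 * s i < B)
    (hsum : ∑ i, s i = m * B)
    (hsched : ∃ σ : Pos (reductionTrace m B s) → ℕ,
      LegalSched (reductionTrace m B s) σ) :
    ThreePartSol m B s := by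
  obtain ⟨σ, hσ⟩ := hsched
  exact VPCAux.main_sol m B s hsum σ hσ
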